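/- arXiv:2308.05827 — 4 statements merged into one kernel-verified Lean document; each statement's English description precedes it below -/
import Mathlib

section
/- Let A be an N × L real matrix of the block form with first L−1 rows (1_{L−1} | 0), L-th row (0,…,0,1), and remaining rows (U | V), and let A' be the N × (L−1) matrix with first L−1 rows 1_{L−1}, L-th row 0, and remaining rows U. Then the sum of the squares of all (L−1) × (L−1) minors of A' is at most the sum of the squares of all L × L minors of A, with equality if and only if V = 0. -/
open Matrix

/-- The sum of the squares of all maximal (`L × L`) minors of an `N × L` real matrix:
for each `L`-element set of rows (enumerated in increasing order) take the square of the
determinant of the corresponding square submatrix, and sum over all such sets.  This is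
the squared Euclidean norm of the vector of Grassmann (Plücker) coordinates. -/
noncomputable def minorSum {N L : ℕ} (A : Matrix (Fin N) (Fin L) ℝ) : ℝ :=
  ∑ I ∈ (Finset.univ.powersetCard L : Finset (Finset (Fin N))).attach,
    (Matrix.det (fun a b : Fin L =>
      A (I.1.orderIsoOfFin (Finset.mem_powersetCard.mp I.2).2 a) b)) ^ 2

noncomputable def gdet {N m : ℕ} (A : Matrix (Fin N) (Fin m) ℝ) (S : Finset (Fin N)) : ℝ :=
  if h : S.card = m then (A.submatrix (fun a => (S.orderIsoOfFin h a : Fin N)) id).det ^ 2 else 0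

lemma gdet_nonneg {N m : ℕ} (A : Matrix (Fin N) (Fin m) ℝ) (S : Finset (Fin N)) :
    0 ≤ gdet A S := by
  unfold gdet; split <;> positivity

lemma minorSum_eq_sum_gdet {N m : ℕ} (A : Matrix (Fin N) (Fin m) ℝ) :
    minorSum A = ∑ S ∈ Finset.univ.powersetCard m, gdet A S := by
  rw [minorSum, ← Finset.sum_attach (Finset.univ.powersetCard m) (gdet A)]
  refine Finset.sum_congr rfl fun I _ => ?_
  have hc : I.1.card = m := (Finset.mem_powersetCard.mp I.2).2
  rw [gdet, dif_pos hc]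
  rfl

lemma sq_det_range_eq {N m : ℕ} (A : Matrix (Fin N) (Fin m) ℝ) {f g : Fin m → Fin N}
    (hf : Function.Injective f) (hg : Function.Injective g) (h : Set.range f = Set.range g) :
    (A.submatrix f id).det ^ 2 = (A.submatrix g id).det ^ 2 := by
  let σ : Equiv.Perm (Fin m) :=
    (Equiv.ofInjective f hf).trans ((Equiv.setCongr h).trans (Equiv.ofInjective g hg).symm)
  have hfg : ∀ i, g (σ i) = f i := by
    intro i
    simp only [σ, Equiv.trans_apply, Equiv.apply_ofInjective_symm]
    rfl
  have heq : A.submatrix f id = (A.submatrix g id).submatrix σ id := by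
    ext i j; simp [hfg]
  rw [heq]
  have hp : ((A.submatrix g id).submatrix σ id).det
      = Equiv.Perm.sign σ * (A.submatrix g id).det :=
    Matrix.det_permute σ (A.submatrix g id)
  rcases Int.units_eq_one_or (Equiv.Perm.sign σ) with h1 | h1 <;>
    rw [hp, h1] <;> push_cast <;> ring

lemma range_orderIsoOfFin {N m : ℕ} (S : Finset (Fin N)) (hS : S.card = m) :
    Set.range (fun a => (S.orderIsoOfFin hS a : Fin N)) = ↑S := by
  ext x
  simp only [Set.mem_range, Finset.mem_coe]
  constructor
  · rintro ⟨a, rfl⟩; exact (S.orderIsoOfFin hS a).2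
  · intro hx; exact ⟨(S.orderIsoOfFin hS).symm ⟨x, hx⟩, by simp⟩

lemma gdet_eq {N m : ℕ} (A : Matrix (Fin N) (Fin m) ℝ) (S : Finset (Fin N)) (hS : S.card = m)
    (f : Fin m → Fin N) (hf : Function.Injective f) (hmem : ∀ i, f i ∈ S) :
    gdet A S = (A.submatrix f id).det ^ 2 := by
  rw [gdet, dif_pos hS]
  refine sq_det_range_eq A ?_ hf ?_
  · exact fun a b hab => (S.orderIsoOfFin hS).injective (Subtype.ext hab)
  · rw [range_orderIsoOfFin S hS]
    have himg : Finset.univ.image f = S := by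
      apply Finset.eq_of_subset_of_card_le
      · intro x hx
        obtain ⟨i, _, rfl⟩ := Finset.mem_image.mp hx
        exact hmem i
      · rw [hS, Finset.card_image_of_injective _ hf, Finset.card_univ, Fintype.card_fin]
    rw [← himg, Finset.coe_image, Finset.coe_univ, Set.image_univ]

lemma det_block1 {L : ℕ} (hL : 1 ≤ L) (M : Matrix (Fin L) (Fin L) ℝ)
    (B : Matrix (Fin (L-1)) (Fin (L-1)) ℝ)
    (h11 : ∀ (a b : Fin (L-1)), M ⟨a, by omega⟩ ⟨b, by omega⟩ = B a b)
    (h21 : ∀ b : Fin (L-1), M ⟨L-1, by omega⟩ ⟨b, by omega⟩ = 0)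
    (h22 : M ⟨L-1, by omega⟩ ⟨L-1, by omega⟩ = 1) :
    M.det = B.det := by
  let e : Fin (L-1) ⊕ Fin 1 ≃ Fin L := finSumFinEquiv.trans (finCongr (by omega))
  have he1 : ∀ a : Fin (L-1), e (Sum.inl a) = (⟨a, by omega⟩ : Fin L) := by
    intro a; apply Fin.ext; simp [e]
  have he2 : ∀ c : Fin 1, e (Sum.inr c) = (⟨L-1, by omega⟩ : Fin L) := by
    intro c
    have hc : c = 0 := Subsingleton.elim _ _
    subst hc; apply Fin.ext; simp [e]
  have key : M.submatrix e e =
      Matrix.fromBlocks B (Matrix.of fun a c => M (e (Sum.inl a)) (e (Sum.inr c))) 0 1 := by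
    ext i j
    rcases i with a | c <;> rcases j with b | c'
    · simp [he1, h11 a b]
    · simp
    · simp [he1, he2, h21 b]
    · simp [he2, h22, Matrix.one_apply, Subsingleton.elim c c']
  rw [← Matrix.det_submatrix_equiv_self e M, key, Matrix.det_fromBlocks_zero₂₁,
    Matrix.det_one, mul_one]

lemma det_block2 {L : ℕ} (hL : 1 ≤ L) (M : Matrix (Fin L) (Fin L) ℝ)
    (h11 : ∀ (a b : Fin (L-1)), M ⟨a, by omega⟩ ⟨b, by omega⟩ = if (a : ℕ) = b then 1 else 0)
    (h12 : ∀ a : Fin (L-1), M ⟨a, by omega⟩ ⟨L-1, by omega⟩ = 0) :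
    M.det = M ⟨L-1, by omega⟩ ⟨L-1, by omega⟩ := by
  let e : Fin (L-1) ⊕ Fin 1 ≃ Fin L := finSumFinEquiv.trans (finCongr (by omega))
  have he1 : ∀ a : Fin (L-1), e (Sum.inl a) = (⟨a, by omega⟩ : Fin L) := by
    intro a; apply Fin.ext; simp [e]
  have he2 : ∀ c : Fin 1, e (Sum.inr c) = (⟨L-1, by omega⟩ : Fin L) := by
    intro c
    have hc : c = 0 := Subsingleton.elim _ _
    subst hc; apply Fin.ext; simp [e]
  have key : M.submatrix e e =
      Matrix.fromBlocks 1 0 (Matrix.of fun c b => M (e (Sum.inr c)) (e (Sum.inl b)))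
        (Matrix.of fun _ _ => M ⟨L-1, by omega⟩ ⟨L-1, by omega⟩) := by
    ext i j
    rcases i with a | c <;> rcases j with b | c'
    · simp only [Matrix.submatrix_apply, Matrix.fromBlocks_apply₁₁, he1, h11 a b,
        Matrix.one_apply]
      split_ifs with h1 h2 h2 <;> first | rfl | (exfalso; exact h2 (Fin.ext h1)) |
        (exfalso; exact h1 (congrArg Fin.val h2))
    · simp [he1, he2, h12 a]
    · simp
    · simp [he2]
  rw [← Matrix.det_submatrix_equiv_self e M, key, Matrix.det_fromBlocks_zero₁₂,
    Matrix.det_one, one_mul, Matrix.det_fin_one]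
  simp

/-- Let `A` be the `N × L` real matrix whose first `L` rows form the
identity block (first `L - 1` rows `(1_{L-1} | 0)`, `L`-th row `(0, …, 0, 1)`) and whose
remaining rows are `(U | V)`, and let `A'` be the `N × (L-1)` matrix of the first
`L - 1` columns of `A` (so its first `L - 1` rows are `1_{L-1}`, its `L`-th row is `0`,
and its remaining rows are `U`).  Then the sum of the squares of all `(L-1) × (L-1)`
minors of `A'` is at most the sum of the squares of all `L × L` minors of `A`, with
equality if and only if `V = 0`. -/
theorem stmt5 {N L : ℕ} (hL : 2 ≤ L) (hNL : L < N)
    (U : ℕ → ℕ → ℝ) (V : ℕ → ℝ)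
    (A : Matrix (Fin N) (Fin L) ℝ)
    (hA : ∀ (i : Fin N) (j : Fin L), A i j =
      if (i : ℕ) < L then (if (i : ℕ) = (j : ℕ) then 1 else 0)
      else (if (j : ℕ) < L - 1 then U ((i : ℕ) - L) (j : ℕ) else V ((i : ℕ) - L)))
    (A' : Matrix (Fin N) (Fin (L - 1)) ℝ)
    (hA' : ∀ (i : Fin N) (j : Fin (L - 1)), A' i j = A i (Fin.castLE (by omega) j)) :
    minorSum A' ≤ minorSum A ∧
      (minorSum A' = minorSum A ↔ ∀ m < N - L, V m = 0) := by
  have hL1 : 1 ≤ L := by omega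
  set k : Fin N := ⟨L-1, by omega⟩ with hkdef
  have hkv : (k : ℕ) = L - 1 := rfl
  -- the k-th row of A' is zero
  have hA'row : ∀ j, A' k j = 0 := by
    intro j
    rw [hA', hA]
    rw [if_pos (show (k : ℕ) < L by omega), if_neg]
    show ¬ ((k : ℕ) = ((Fin.castLE (by omega) j : Fin L) : ℕ))
    have : ((Fin.castLE (show L - 1 ≤ L by omega) j : Fin L) : ℕ) = (j : ℕ) := rfl
    have hj := j.isLt
    omega
  set Q := (Finset.univ.powersetCard (L-1) : Finset (Finset (Fin N))).filter (fun S => k ∉ S)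
    with hQdef
  set P := (Finset.univ.powersetCard L : Finset (Finset (Fin N))).filter (fun I => k ∈ I)
    with hPdef
  set P' := (Finset.univ.powersetCard L : Finset (Finset (Fin N))).filter (fun I => k ∉ I)
    with hP'def
  -- minorSum A' only sees sets avoiding k
  have hMA' : minorSum A' = ∑ S ∈ Q, gdet A' S := by
    rw [minorSum_eq_sum_gdet, hQdef, Finset.sum_filter_of_ne]
    intro S hSmem hne
    by_contra hkS
    apply hne
    have hScard : S.card = L - 1 := (Finset.mem_powersetCard.mp hSmem).2
    rw [gdet, dif_pos hScard]
    have hz : (A'.submatrix (fun a => ((S.orderIsoOfFin hScard a : Fin N))) id).det = 0 := by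
      apply Matrix.det_eq_zero_of_row_eq_zero ((S.orderIsoOfFin hScard).symm ⟨k, hkS⟩)
      intro j
      simp only [Matrix.submatrix_apply, OrderIso.apply_symm_apply, id]
      exact hA'row j
    rw [hz]; norm_num
  have hMA : minorSum A = (∑ I ∈ P, gdet A I) + (∑ I ∈ P', gdet A I) := by
    rw [minorSum_eq_sum_gdet, hPdef, hP'def,
      Finset.sum_filter_add_sum_filter_not (Finset.univ.powersetCard L) (fun I => k ∈ I)]
  -- the bijection S ↦ insert k S
  have hbij : ∑ S ∈ Q, gdet A' S = ∑ I ∈ P, gdet A I := by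
    refine Finset.sum_nbij' (i := fun S => insert k S) (j := fun I => I.erase k)
      ?_ ?_ ?_ ?_ ?_
    · intro S hS
      rw [hQdef, Finset.mem_filter, Finset.mem_powersetCard] at hS
      rw [hPdef, Finset.mem_filter, Finset.mem_powersetCard]
      exact ⟨⟨Finset.subset_univ _, by
        rw [Finset.card_insert_of_notMem hS.2, hS.1.2]; omega⟩, Finset.mem_insert_self k S⟩
    · intro I hI
      rw [hPdef, Finset.mem_filter, Finset.mem_powersetCard] at hI
      rw [hQdef, Finset.mem_filter, Finset.mem_powersetCard]
      exact ⟨⟨Finset.subset_univ _, by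
        rw [Finset.card_erase_of_mem hI.2, hI.1.2]⟩, Finset.notMem_erase k I⟩
    · intro S hS
      rw [hQdef, Finset.mem_filter] at hS
      exact Finset.erase_insert hS.2
    · intro I hI
      rw [hPdef, Finset.mem_filter] at hI
      exact Finset.insert_erase hI.2
    · intro S hS
      rw [hQdef, Finset.mem_filter, Finset.mem_powersetCard] at hS
      obtain ⟨⟨-, hScard⟩, hkS⟩ := hS
      have hIcard : (insert k S).card = L := by
        rw [Finset.card_insert_of_notMem hkS, hScard]; omega
      have hfinj : Function.Injective (fun i : Fin L =>
          if h : (i : ℕ) < L - 1 then ((S.orderIsoOfFin hScard ⟨i, h⟩ : Fin N)) else k) := by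
        intro a b hab
        dsimp only at hab
        split_ifs at hab with h1 h2 h2
        · have h3 : (⟨(a : ℕ), h1⟩ : Fin (L-1)) = ⟨(b : ℕ), h2⟩ :=
            (S.orderIsoOfFin hScard).injective (Subtype.ext hab)
          have h4 := congrArg Fin.val h3
          exact Fin.ext h4
        · exact absurd (hab ▸ (S.orderIsoOfFin hScard ⟨(a : ℕ), h1⟩).2) hkS
        · exact absurd (hab.symm ▸ (S.orderIsoOfFin hScard ⟨(b : ℕ), h2⟩).2) hkS
        · exact Fin.ext (by omega)
      have hfmem : ∀ i : Fin L,
          (if h : (i : ℕ) < L - 1 then ((S.orderIsoOfFin hScard ⟨i, h⟩ : Fin N)) else k)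
            ∈ insert k S := by
        intro i
        split
        · exact Finset.mem_insert_of_mem (S.orderIsoOfFin hScard _).2
        · exact Finset.mem_insert_self k S
      rw [gdet_eq A (insert k S) hIcard _ hfinj hfmem, gdet, dif_pos hScard]
      have hdet : (A.submatrix (fun i : Fin L =>
          if h : (i : ℕ) < L - 1 then ((S.orderIsoOfFin hScard ⟨i, h⟩ : Fin N)) else k) id).det
          = (A'.submatrix (fun a => ((S.orderIsoOfFin hScard a : Fin N))) id).det := by
        apply det_block1 hL1
        · intro a b
          show A (if h : ((⟨(a : ℕ), by omega⟩ : Fin L) : ℕ) < L - 1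
              then ((S.orderIsoOfFin hScard ⟨_, h⟩ : Fin N)) else k) ⟨(b : ℕ), by omega⟩
            = A' ((S.orderIsoOfFin hScard a : Fin N)) b
          rw [dif_pos (show ((⟨(a : ℕ), by omega⟩ : Fin L) : ℕ) < L - 1 from a.isLt), hA']
          rfl
        · intro b
          show A (if h : ((⟨L - 1, by omega⟩ : Fin L) : ℕ) < L - 1
              then ((S.orderIsoOfFin hScard ⟨_, h⟩ : Fin N)) else k) ⟨(b : ℕ), by omega⟩ = 0
          rw [dif_neg (show ¬ ((⟨L - 1, by omega⟩ : Fin L) : ℕ) < L - 1 by omega), hA]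
          rw [if_pos (show (k : ℕ) < L by omega), if_neg]
          show ¬ ((k : ℕ) = ((⟨(b : ℕ), by omega⟩ : Fin L) : ℕ))
          have hb := b.isLt
          show ¬ (L - 1 = (b : ℕ))
          omega
        · show A (if h : ((⟨L - 1, by omega⟩ : Fin L) : ℕ) < L - 1
              then ((S.orderIsoOfFin hScard ⟨_, h⟩ : Fin N)) else k) ⟨L - 1, by omega⟩ = 1
          rw [dif_neg (show ¬ ((⟨L - 1, by omega⟩ : Fin L) : ℕ) < L - 1 by omega), hA]
          rw [if_pos (show (k : ℕ) < L by omega), if_pos (show (k : ℕ) = L - 1 from rfl)]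
      rw [hdet]
  have hRnn : 0 ≤ ∑ I ∈ P', gdet A I := Finset.sum_nonneg fun I _ => gdet_nonneg A I
  have hsplit : minorSum A = minorSum A' + ∑ I ∈ P', gdet A I := by
    rw [hMA, hMA', hbij]
  constructor
  · linarith
  · rw [hsplit]
    constructor
    · intro he
      have hR0 : ∑ I ∈ P', gdet A I = 0 := by linarith
      have hall := (Finset.sum_eq_zero_iff_of_nonneg (fun I _ => gdet_nonneg A I)).mp hR0
      intro m hm
      have hfminj : Function.Injective (fun i : Fin L =>
          if h : (i : ℕ) < L - 1 then (⟨(i : ℕ), by omega⟩ : Fin N)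
          else ⟨L + m, by omega⟩) := by
        intro a b hab
        dsimp only at hab
        split_ifs at hab with h1 h2 h2
        · have h4 := congrArg Fin.val hab
          exact Fin.ext h4
        · have := congrArg Fin.val hab
          have : (a : ℕ) = L + m := this
          omega
        · have := congrArg Fin.val hab
          have : L + m = (b : ℕ) := this
          omega
        · exact Fin.ext (by omega)
      set fm : Fin L → Fin N := fun i =>
          if h : (i : ℕ) < L - 1 then (⟨(i : ℕ), by omega⟩ : Fin N)
          else ⟨L + m, by omega⟩ with hfmdef
      set Im := Finset.image fm Finset.univ with hImdef
      have hImcard : Im.card = L := by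
        rw [hImdef, Finset.card_image_of_injective _ hfminj, Finset.card_univ,
          Fintype.card_fin]
      have hImmem : Im ∈ P' := by
        rw [hP'def, Finset.mem_filter]
        refine ⟨Finset.mem_powersetCard_univ.mpr hImcard, ?_⟩
        intro hkIm
        obtain ⟨i, -, hi⟩ := Finset.mem_image.mp hkIm
        rw [hfmdef] at hi
        dsimp only at hi
        split_ifs at hi with h
        · have h2 : (i : ℕ) = L - 1 := congrArg Fin.val hi
          omega
        · have h2 : L + m = L - 1 := congrArg Fin.val hi
          omega
      have h0 := hall Im hImmem
      rw [gdet_eq A Im hImcard fm hfminj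
        (fun i => Finset.mem_image_of_mem fm (Finset.mem_univ i))] at h0
      have hdet : (A.submatrix fm id).det = V m := by
        have hd := det_block2 hL1 (A.submatrix fm id) ?_ ?_
        · rw [hd]
          show A (fm ⟨L - 1, by omega⟩) ⟨L - 1, by omega⟩ = V m
          rw [hfmdef]
          dsimp only
          rw [dif_neg (show ¬ ((⟨L - 1, by omega⟩ : Fin L) : ℕ) < L - 1 by omega), hA]
          rw [if_neg (show ¬ (L + m < L) by omega),
            if_neg (show ¬ (L - 1 < L - 1) by omega)]
          show V (L + m - L) = V m
          congr 1
          omega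
        · intro a b
          show A (fm ⟨(a : ℕ), by omega⟩) ⟨(b : ℕ), by omega⟩ = if (a : ℕ) = (b : ℕ) then 1 else 0
          rw [hfmdef]
          dsimp only
          rw [dif_pos (show ((⟨(a : ℕ), by omega⟩ : Fin L) : ℕ) < L - 1 from a.isLt), hA]
          rw [if_pos (show (a : ℕ) < L from by have := a.isLt; omega)]
        · intro a
          show A (fm ⟨(a : ℕ), by omega⟩) ⟨L - 1, by omega⟩ = 0
          rw [hfmdef]
          dsimp only
          rw [dif_pos (show ((⟨(a : ℕ), by omega⟩ : Fin L) : ℕ) < L - 1 from a.isLt), hA]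
          rw [if_pos (show (a : ℕ) < L from by have := a.isLt; omega), if_neg]
          show ¬ ((a : ℕ) = L - 1)
          have := a.isLt
          omega
      rw [hdet] at h0
      exact pow_eq_zero_iff (by norm_num) |>.mp h0
    · intro hV
      have hR0 : ∑ I ∈ P', gdet A I = 0 := by
        apply Finset.sum_eq_zero
        intro I hI
        rw [hP'def, Finset.mem_filter] at hI
        obtain ⟨hm, hkI⟩ := hI
        have hIcard : I.card = L := (Finset.mem_powersetCard.mp hm).2
        rw [gdet, dif_pos hIcard]
        have hz : (A.submatrix (fun a => ((I.orderIsoOfFin hIcard a : Fin N))) id).det = 0 := by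
          apply Matrix.det_eq_zero_of_column_eq_zero ⟨L - 1, by omega⟩
          intro a
          have hrI : ((I.orderIsoOfFin hIcard a : Fin N)) ∈ I := (I.orderIsoOfFin hIcard a).2
          have hrk : ((I.orderIsoOfFin hIcard a : Fin N) : ℕ) ≠ L - 1 := by
            intro h
            exact hkI (by rwa [show (I.orderIsoOfFin hIcard a : Fin N) = k from Fin.ext h] at hrI)
          show A ((I.orderIsoOfFin hIcard a : Fin N)) ⟨L - 1, by omega⟩ = 0
          rw [hA]
          by_cases hr : ((I.orderIsoOfFin hIcard a : Fin N) : ℕ) < L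
          · rw [if_pos hr, if_neg]
            show ¬ (((I.orderIsoOfFin hIcard a : Fin N) : ℕ) = L - 1)
            exact hrk
          · rw [if_neg hr, if_neg (show ¬ ((L : ℕ) - 1 < L - 1) by omega)]
            apply hV
            have := (I.orderIsoOfFin hIcard a : Fin N).isLt
            omega
        rw [hz]; norm_num
      linarith
end

section
/- Let X be an N × L real matrix of rank L such that the submatrix X_J on some L-element row set J is a permutation matrix, and for 1 ≤ i ≤ L let X' be X with the i-th column deleted. Then the sum of the squares of all (L−1) × (L−1) minors of X' is at most the sum of the squares of all L × L minors of X, with equality if and only if the i-th column of X is a standard basis vector of ℝ^N. -/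
open Matrix

/-- Squares of determinants are invariant under row and column permutations. -/
lemma det_sq_perms {n : ℕ} (M : Matrix (Fin n) (Fin n) ℝ) (p q : Equiv.Perm (Fin n)) :
    (Matrix.det (M.submatrix ⇑p ⇑q)) ^ 2 = M.det ^ 2 := by
  have h1 : M.submatrix ⇑p ⇑q = (M.submatrix ⇑p id).submatrix id ⇑q := rfl
  rw [h1, Matrix.det_permute', Matrix.det_permute, mul_pow, mul_pow]
  rcases Int.units_eq_one_or (Equiv.Perm.sign p) with h | h <;>
    rcases Int.units_eq_one_or (Equiv.Perm.sign q) with h' | h' <;>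
      simp [h, h']

/-- A matrix which agrees with the identity outside one row has determinant the diagonal
entry in that row. -/
lemma det_eq_diag_entry {n : Type*} [DecidableEq n] [Fintype n]
    (M : Matrix n n ℝ) (p : n) (h : ∀ a, a ≠ p → ∀ b, M a b = if a = b then 1 else 0) :
    M.det = M p p := by
  rw [Matrix.det_apply, Finset.sum_eq_single (1 : Equiv.Perm n)]
  · simp only [Equiv.Perm.sign_one, one_smul, Equiv.Perm.one_apply]
    rw [← Finset.mul_prod_erase Finset.univ _ (Finset.mem_univ p)]
    have h1 : ∏ x ∈ Finset.univ.erase p, M x x = 1 := by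
      refine Finset.prod_eq_one fun x hx => ?_
      rw [h x (Finset.mem_erase.mp hx).1, if_pos rfl]
    rw [h1, mul_one]
  · intro σ _ hσ
    have hex : ∃ x, σ x ≠ x ∧ σ x ≠ p := by
      by_contra hc
      push_neg at hc
      obtain ⟨x, hx⟩ : ∃ x, σ x ≠ x := by
        by_contra h2; push_neg at h2; exact hσ (Equiv.ext h2)
      have hxp : σ x = p := hc x hx
      have hyx : σ (σ x) ≠ σ x := fun hfix => hx (σ.injective hfix)
      have h3 : σ (σ x) = p := hc _ hyx
      rw [hxp] at h3 hyx
      exact hyx h3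
    obtain ⟨x, hx1, hx2⟩ := hex
    have h0 : M (σ x) x = 0 := by rw [h (σ x) hx2 x, if_neg hx1]
    rw [show (∏ i, M (σ i) i) = 0 from Finset.prod_eq_zero (Finset.mem_univ x) h0, smul_zero]
  · intro h1; exact absurd (Finset.mem_univ _) h1

/-- Cofactor expansion (up to sign) along a row which is a standard basis vector. -/
lemma det_sq_cofactor {m : ℕ} (M : Matrix (Fin (m + 1)) (Fin (m + 1)) ℝ)
    (a₀ b₀ : Fin (m + 1)) (hrow : ∀ b, M a₀ b = if b = b₀ then 1 else 0) :
    M.det ^ 2 = (Matrix.det (M.submatrix (Fin.succAbove a₀) (Fin.succAbove b₀))) ^ 2 := by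
  set p : Equiv.Perm (Fin (m + 1)) :=
    (finSuccEquiv' (0 : Fin (m + 1))).trans (finSuccEquiv' a₀).symm with hp
  set q : Equiv.Perm (Fin (m + 1)) :=
    (finSuccEquiv' (0 : Fin (m + 1))).trans (finSuccEquiv' b₀).symm with hq
  have hpsucc : ∀ j : Fin m, p j.succ = a₀.succAbove j := by
    intro j
    rw [hp]
    simp only [Equiv.trans_apply]
    rw [← Fin.succAbove_zero, finSuccEquiv'_succAbove, finSuccEquiv'_symm_some]
  have hqsucc : ∀ j : Fin m, q j.succ = b₀.succAbove j := by
    intro j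
    rw [hq]
    simp only [Equiv.trans_apply]
    rw [← Fin.succAbove_zero, finSuccEquiv'_succAbove, finSuccEquiv'_symm_some]
  have hq0 : ∀ b : Fin (m + 1), q b = b₀ ↔ b = 0 := by
    intro b
    constructor
    · intro hb
      have : b = q.symm b₀ := by rw [← hb, Equiv.symm_apply_apply]
      rw [this]
      rw [hq]
      simp only [Equiv.symm_trans_apply, Equiv.symm_symm]
      rw [finSuccEquiv'_at, finSuccEquiv'_symm_none]
    · rintro rfl
      rw [hq]
      simp only [Equiv.trans_apply]
      rw [finSuccEquiv'_at, finSuccEquiv'_symm_none]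
  set M₂ := M.submatrix ⇑p ⇑q with hM₂
  have hpq : M₂.det ^ 2 = M.det ^ 2 := det_sq_perms M p q
  have hp0 : p 0 = a₀ := by
    rw [hp]; simp only [Equiv.trans_apply]; rw [finSuccEquiv'_at, finSuccEquiv'_symm_none]
  have hrow0 : ∀ b, M₂ 0 b = if b = 0 then 1 else 0 := by
    intro b
    rw [hM₂]
    simp only [Matrix.submatrix_apply, hp0]
    rw [hrow]
    by_cases hb : b = 0
    · rw [if_pos ((hq0 b).mpr hb), if_pos hb]
    · rw [if_neg (fun hc => hb ((hq0 b).mp hc)), if_neg hb]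
  have hdet2 : M₂.det = (M₂.submatrix Fin.succ Fin.succ).det := by
    rw [Matrix.det_succ_row_zero, Finset.sum_eq_single (0 : Fin (m + 1))]
    · rw [hrow0 0, if_pos rfl]
      simp [Fin.succAbove_zero]
    · intro j _ hj
      rw [hrow0 j, if_neg hj]
      ring
    · intro h1; exact absurd (Finset.mem_univ _) h1
  have hsub : M₂.submatrix Fin.succ Fin.succ
      = M.submatrix (Fin.succAbove a₀) (Fin.succAbove b₀) := by
    ext a b
    simp only [hM₂, Matrix.submatrix_apply, hpsucc, hqsucc]
  rw [← hpq, hdet2, hsub]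

/-- The square of one maximal minor, as a function of the row set. -/
noncomputable def detSq {N k : ℕ} (A : Matrix (Fin N) (Fin k) ℝ) (I : Finset (Fin N)) : ℝ :=
  if h : I.card = k then
    (Matrix.det fun a b => A ((I.orderIsoOfFin h a : Fin N)) b) ^ 2 else 0

lemma detSq_nonneg {N k : ℕ} (A : Matrix (Fin N) (Fin k) ℝ) (I : Finset (Fin N)) :
    0 ≤ detSq A I := by
  rw [detSq]
  split
  · exact sq_nonneg _
  · exact le_refl 0

lemma minorSum_eq {N k : ℕ} (A : Matrix (Fin N) (Fin k) ℝ) :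
    minorSum A = ∑ I ∈ Finset.univ.powersetCard k, detSq A I := by
  rw [minorSum, ← Finset.sum_attach (Finset.univ.powersetCard k) (detSq A)]
  refine Finset.sum_congr rfl fun x _ => ?_
  rw [detSq, dif_pos (Finset.mem_powersetCard.mp x.2).2]

/-- Let `X` be an `N × L` real matrix of rank `L` such that its submatrix
on some `L`-element row set `J` (given by an injective `g : Fin L → Fin N`) is a
permutation matrix, and for `i : Fin L` let `X'` be `X` with the `i`-th column deleted.
Then the sum of the squares of all `(L-1) × (L-1)` minors of `X'` is at most the sum of
the squares of all `L × L` minors of `X`, with equality if and only if the `i`-th column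
of `X` is a standard basis vector of `ℝ^N`. -/
theorem stmt6 {N L : ℕ} (hL : 2 ≤ L) (hNL : L < N)
    (X : Matrix (Fin N) (Fin L) ℝ) (hrank : X.rank = L)
    (g : Fin L → Fin N) (hg : Function.Injective g)
    (σ : Equiv.Perm (Fin L))
    (hperm : ∀ a b : Fin L, X (g a) b = if σ a = b then 1 else 0)
    (i : Fin L)
    (X' : Matrix (Fin N) (Fin (L - 1)) ℝ)
    (hX' : ∀ (a : Fin N) (b : Fin (L - 1)), X' a b =
      X a (if (b : ℕ) < (i : ℕ) then (⟨(b : ℕ), by omega⟩ : Fin L)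
           else (⟨(b : ℕ) + 1, by omega⟩ : Fin L))) :
    minorSum X' ≤ minorSum X ∧
      (minorSum X' = minorSum X ↔
        ∃ n : Fin N, ∀ m : Fin N, X m i = if m = n then 1 else 0) := by
  obtain ⟨m, rfl⟩ : ∃ m, L = m + 1 := ⟨L - 1, by omega⟩

  have hmm : m + 1 - 1 = m := rfl
  set r : Fin N := g (σ.symm i) with hrdef
  have hsi : σ (σ.symm i) = i := Equiv.apply_symm_apply σ i
  have hrowr : ∀ b, X r b = if b = i then 1 else 0 := by
    intro b
    rw [hrdef, hperm, hsi]
    exact if_congr eq_comm rfl rfl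
  have hX'2 : ∀ (a : Fin N) (b : Fin m), X' a b = X a (i.succAbove b) := by
    intro a b
    rw [hX' a b]
    congr 1
  have hX'rowzero : ∀ b : Fin m, X' r b = 0 := by
    intro b
    rw [hX'2, hrowr, if_neg (Fin.succAbove_ne i b)]
  -- minors of X' containing row r vanish
  have hKzero : ∀ K : Finset (Fin N), r ∈ K → detSq X' K = 0 := by
    intro K hrK
    rw [detSq]
    split
    next h =>
      set a : Fin (m + 1 - 1) := (K.orderIsoOfFin h).symm ⟨r, hrK⟩ with ha
      have har : ((K.orderIsoOfFin h a : Fin N)) = r := by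
        rw [ha, (K.orderIsoOfFin h).apply_symm_apply]
      rw [show (det fun a b => X' (↑((K.orderIsoOfFin h) a)) b) = 0 from
        Matrix.det_eq_zero_of_row_eq_zero a (fun b => by rw [har, hX'rowzero])]
      exact zero_pow two_ne_zero
    next h => rfl
  -- key bijection of squared minors
  have hkey : ∀ K : Finset (Fin N), K.card = m → r ∉ K →
      detSq X' K = detSq X (insert r K) := by
    intro K hK hrK
    have hK' : K.card = m + 1 - 1 := hK
    have hIcard : (insert r K).card = m + 1 := by
      rw [Finset.card_insert_of_notMem hrK, hK]
    rw [detSq, detSq, dif_pos hK', dif_pos hIcard]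
    simp only [Finset.coe_orderIsoOfFin_apply]
    obtain ⟨p, hp⟩ : ∃ p, (insert r K).orderEmbOfFin hIcard p = r := by
      have h1 := Finset.range_orderEmbOfFin (insert r K) hIcard
      have h2 : r ∈ (↑(insert r K) : Set (Fin N)) := Finset.mem_insert_self r K
      rw [← h1] at h2
      exact h2
    have hcof := det_sq_cofactor (fun a b => X ((insert r K).orderEmbOfFin hIcard a) b) p i
      (fun b => by
        show X ((insert r K).orderEmbOfFin hIcard p) b = _
        rw [hp, hrowr])
    have hcomp : ∀ a : Fin m,
        (insert r K).orderEmbOfFin hIcard (p.succAbove a) = K.orderEmbOfFin hK' a := by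
      have hmem : ∀ a : Fin m, (insert r K).orderEmbOfFin hIcard (p.succAbove a) ∈ K := by
        intro a
        have h1 : (insert r K).orderEmbOfFin hIcard (p.succAbove a) ∈ insert r K :=
          Finset.orderEmbOfFin_mem _ _ _
        rcases Finset.mem_insert.mp h1 with h2 | h2
        · exact absurd (((insert r K).orderEmbOfFin hIcard).injective (h2.trans hp.symm))
            (Fin.succAbove_ne p a)
        · exact h2
      have hmono : StrictMono (fun a : Fin m =>
          (insert r K).orderEmbOfFin hIcard (p.succAbove a)) :=
        ((insert r K).orderEmbOfFin hIcard).strictMono.comp (Fin.strictMono_succAbove p)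
      intro a
      exact congrFun (Finset.orderEmbOfFin_unique hK' hmem hmono) a
    have hmat : (fun (a b : Fin (m + 1 - 1)) => X' (K.orderEmbOfFin hK' a) b)
        = Matrix.submatrix (fun a b => X ((insert r K).orderEmbOfFin hIcard a) b)
            p.succAbove i.succAbove := by
      funext a b
      show X' (K.orderEmbOfFin hK' a) b = X ((insert r K).orderEmbOfFin hIcard (p.succAbove a)) (i.succAbove b)
      rw [hX'2, hcomp a]
    rw [hmat]
    exact hcof.symm
  -- sum decompositions
  have hsum' : minorSum X' =
      ∑ K ∈ (Finset.univ.powersetCard m).filter (fun K => r ∉ K), detSq X' K := by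
    rw [minorSum_eq]
    simp only [hmm]
    symm
    apply Finset.sum_filter_of_ne
    intro K _ hne hrK
    exact hne (hKzero K hrK)
  have hbij : ∑ K ∈ (Finset.univ.powersetCard m).filter (fun K => r ∉ K), detSq X' K
      = ∑ I ∈ (Finset.univ.powersetCard (m + 1)).filter (fun I => r ∈ I), detSq X I := by
    refine Finset.sum_nbij' (fun K => insert r K) (fun I => I.erase r) ?_ ?_ ?_ ?_ ?_
    · intro K hK
      obtain ⟨hK1, hK2⟩ := Finset.mem_filter.mp hK
      refine Finset.mem_filter.mpr ⟨Finset.mem_powersetCard.mpr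
        ⟨Finset.subset_univ _, ?_⟩, Finset.mem_insert_self r K⟩
      rw [Finset.card_insert_of_notMem hK2, (Finset.mem_powersetCard.mp hK1).2]
    · intro I hI
      obtain ⟨hI1, hI2⟩ := Finset.mem_filter.mp hI
      refine Finset.mem_filter.mpr ⟨Finset.mem_powersetCard.mpr
        ⟨Finset.subset_univ _, ?_⟩, Finset.notMem_erase r I⟩
      rw [Finset.card_erase_of_mem hI2, (Finset.mem_powersetCard.mp hI1).2]
      omega
    · intro K hK
      exact Finset.erase_insert (Finset.mem_filter.mp hK).2
    · intro I hI
      exact Finset.insert_erase (Finset.mem_filter.mp hI).2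
    · intro K hK
      obtain ⟨hK1, hK2⟩ := Finset.mem_filter.mp hK
      exact hkey K (Finset.mem_powersetCard.mp hK1).2 hK2
  have hsplit : minorSum X =
      (∑ I ∈ (Finset.univ.powersetCard (m + 1)).filter (fun I => r ∈ I), detSq X I)
      + ∑ I ∈ (Finset.univ.powersetCard (m + 1)).filter (fun I => ¬ r ∈ I), detSq X I := by
    rw [minorSum_eq, Finset.sum_filter_add_sum_filter_not]
  set T := ∑ I ∈ (Finset.univ.powersetCard (m + 1)).filter (fun I => ¬ r ∈ I), detSq X I
    with hT
  have hTnonneg : 0 ≤ T := Finset.sum_nonneg fun I _ => detSq_nonneg X I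
  have hXX' : minorSum X = minorSum X' + T := by
    rw [hsplit, hsum', hbij]
  constructor
  · linarith
  constructor
  · -- equality implies column i is standard basis vector (namely e_r)
    intro heq
    have hT0 : T = 0 := by linarith
    have hall : ∀ I ∈ (Finset.univ.powersetCard (m + 1)).filter (fun I => ¬ r ∈ I),
        detSq X I = 0 :=
      (Finset.sum_eq_zero_iff_of_nonneg (fun I _ => detSq_nonneg X I)).mp hT0
    refine ⟨r, fun q => ?_⟩
    by_cases hq : q = r
    · rw [if_pos hq, hq, hrowr, if_pos rfl]
    · rw [if_neg hq]
      by_cases hqg : ∃ b, g b = q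
      · obtain ⟨b, rfl⟩ := hqg
        rw [hperm, if_neg]
        intro hc
        apply hq
        rw [hrdef, ← hc, Equiv.symm_apply_apply]
      · classical
        set S := (Finset.univ.erase (σ.symm i)).image g with hS
        have hScard : S.card = m := by
          rw [hS, Finset.card_image_of_injective _ hg,
            Finset.card_erase_of_mem (Finset.mem_univ _), Finset.card_univ,
            Fintype.card_fin]
          omega
        have hrS : r ∉ S := by
          rw [hS]
          intro hmem
          obtain ⟨b, hb1, hb2⟩ := Finset.mem_image.mp hmem
          exact (Finset.mem_erase.mp hb1).1 (hg hb2)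
        have hqS : q ∉ S := fun hmem => by
          obtain ⟨b, _, hb2⟩ := Finset.mem_image.mp hmem
          exact hqg ⟨b, hb2⟩
        set I := insert q S with hI
        have hIcard : I.card = m + 1 := by
          rw [hI, Finset.card_insert_of_notMem hqS, hScard]
        have hrI : r ∉ I := by
          rw [hI]
          intro hmem
          rcases Finset.mem_insert.mp hmem with h1 | h1
          · exact hq h1.symm
          · exact hrS h1
        have hdet0 : detSq X I = 0 := hall I (Finset.mem_filter.mpr
          ⟨Finset.mem_powersetCard.mpr ⟨Finset.subset_univ _, hIcard⟩, hrI⟩)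
        have hdetq : detSq X I = (X q i) ^ 2 := by
          rw [detSq, dif_pos hIcard]
          simp only [Finset.coe_orderIsoOfFin_apply]
          set E := I.orderEmbOfFin hIcard with hE
          obtain ⟨p, hp⟩ : ∃ p, E p = q := by
            have h1 := Finset.range_orderEmbOfFin I hIcard
            have h2 : q ∈ (↑I : Set (Fin N)) := by
              rw [hI]; exact Finset.mem_insert_self q S
            rw [← h1] at h2
            exact h2
          set c : Fin (m + 1) → Fin (m + 1) :=
            fun a => if h : ∃ b, g b = E a then σ h.choose else i with hc
          have hmemS : ∀ a, a ≠ p → E a ∈ S := by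
            intro a ha
            have hmem : E a ∈ I := Finset.orderEmbOfFin_mem I hIcard a
            rcases Finset.mem_insert.mp (hI ▸ hmem) with h1 | h1
            · exact absurd (E.injective (h1.trans hp.symm)) ha
            · exact h1
          have hexS : ∀ a, a ≠ p → ∃ b, g b = E a := by
            intro a ha
            obtain ⟨b0, _, hb0⟩ := Finset.mem_image.mp (hS ▸ hmemS a ha)
            exact ⟨b0, hb0⟩
          have hrownep : ∀ a, a ≠ p → ∀ b, X (E a) b = if c a = b then 1 else 0 := by
            intro a ha b
            have hex := hexS a ha
            simp only [hc]
            rw [dif_pos hex]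
            conv_lhs => rw [← hex.choose_spec]
            rw [hperm]
          have hcp : c p = i := by
            simp only [hc]
            rw [dif_neg]
            rintro ⟨b, hb⟩
            exact hqg ⟨b, hb.trans hp⟩
          have hcnei : ∀ a, a ≠ p → c a ≠ i := by
            intro a ha hci
            have hex := hexS a ha
            have hca : c a = σ hex.choose := by simp only [hc]; rw [dif_pos hex]
            have h2 : hex.choose = σ.symm i := by
              apply σ.injective
              rw [← hca, hci, hsi]
            have h3 : E a = r := by rw [← hex.choose_spec, h2, hrdef]
            exact hrI (h3 ▸ Finset.orderEmbOfFin_mem I hIcard a)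
          have hcinj : Function.Injective c := by
            intro a a' hca
            by_cases ha : a = p <;> by_cases ha' : a' = p
            · rw [ha, ha']
            · exfalso
              rw [ha, hcp] at hca
              exact hcnei a' ha' hca.symm
            · exfalso
              rw [ha', hcp] at hca
              exact hcnei a ha hca
            · have hex := hexS a ha
              have hex' := hexS a' ha'
              have hca2 : c a = σ hex.choose := by simp only [hc]; rw [dif_pos hex]
              have hca2' : c a' = σ hex'.choose := by simp only [hc]; rw [dif_pos hex']
              rw [hca2, hca2'] at hca
              have h2 := σ.injective hca
              apply E.injective
              rw [← hex.choose_spec, ← hex'.choose_spec, h2]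
          set π : Equiv.Perm (Fin (m + 1)) :=
            Equiv.ofBijective c (Finite.injective_iff_bijective.mp hcinj) with hπ
          have hπa : ∀ a, π a = c a := fun a => rfl
          set A : Matrix (Fin (m + 1)) (Fin (m + 1)) ℝ := fun a b => X (E a) b with hA
          have hsq : (Matrix.det A) ^ 2
              = (Matrix.det (A.submatrix ⇑(Equiv.refl (Fin (m + 1))) ⇑π)) ^ 2 :=
            (det_sq_perms A _ π).symm
          have hBdiag : ∀ a, a ≠ p → ∀ b,
              (A.submatrix ⇑(Equiv.refl (Fin (m + 1))) ⇑π) a b = if a = b then 1 else 0 := by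
            intro a ha b
            rw [Matrix.submatrix_apply]
            have : A (Equiv.refl _ a) (π b) = X (E a) (π b) := rfl
            rw [this, hrownep a ha (π b), ← hπa a]
            exact if_congr (Equiv.apply_eq_iff_eq π) rfl rfl
          have hdetB : (A.submatrix ⇑(Equiv.refl (Fin (m + 1))) ⇑π).det = X q i := by
            rw [det_eq_diag_entry _ p hBdiag, Matrix.submatrix_apply]
            have : A (Equiv.refl _ p) (π p) = X (E p) (c p) := rfl
            rw [this, hcp, hp]
          rw [hsq, hdetB]
        have hsq0 : (X q i) ^ 2 = 0 := by rw [← hdetq, hdet0]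
        exact pow_eq_zero_iff two_ne_zero |>.mp hsq0
  · -- standard basis column implies equality
    rintro ⟨n, hn⟩
    have hnr : n = r := by
      have h1 : X r i = 1 := by rw [hrowr, if_pos rfl]
      have h2 := hn r
      rw [h1] at h2
      by_contra hc
      rw [if_neg (fun hrn : r = n => hc hrn.symm)] at h2
      norm_num at h2
    have hT0 : T = 0 := by
      rw [hT]
      refine Finset.sum_eq_zero fun I hI => ?_
      obtain ⟨hI1, hI2⟩ := Finset.mem_filter.mp hI
      rw [detSq, dif_pos (Finset.mem_powersetCard.mp hI1).2]
      rw [show (det fun a b => X (↑((I.orderIsoOfFin (Finset.mem_powersetCard.mp hI1).2) a)) b) = 0 from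
        Matrix.det_eq_zero_of_column_eq_zero i ?_]
      · exact zero_pow two_ne_zero
      · intro a
        rw [hn, if_neg]
        intro hc
        apply hI2
        rw [← hnr, ← hc]
        exact (I.orderIsoOfFin _ a).2
    linarith
end

section
/- Let A be an N × L real matrix of rank L with an L-row submatrix equal to the identity (rows indexed by J = set with A_J = 1_L), and for a subset I ⊆ {1,…,L} let A^I be the submatrix of A on the columns indexed by I. Then for I₁ ⊊ I₂ ⊆ {1,…,L}, the sum of squares of the |I₁| × |I₁| minors of A^{I₁} is at most the sum of squares of the |I₂| × |I₂| minors of A^{I₂}. -/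
open Matrix

/-- For an `N × L` real matrix `A` and a set `I` of column indices, the sum of the
squares of all maximal (`|I| × |I|`) minors of the column submatrix `A^I` of `A`
(columns indexed by `I`, rows running over all `|I|`-element row sets, both enumerated
in increasing order). -/
noncomputable def colMinorSum {N L : ℕ} (A : Matrix (Fin N) (Fin L) ℝ)
    (I : Finset (Fin L)) : ℝ :=
  ∑ J ∈ (Finset.univ.powersetCard I.card : Finset (Finset (Fin N))).attach,
    (Matrix.det (fun a b : Fin I.card =>
      A (J.1.orderIsoOfFin (Finset.mem_powersetCard.mp J.2).2 a)
        (I.orderIsoOfFin rfl b))) ^ 2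

namespace Stmt8Aux

/-- One squared minor, with a `dite` to avoid carrying card proofs. -/
noncomputable def mnr {N L : ℕ} (A : Matrix (Fin N) (Fin L) ℝ)
    (I : Finset (Fin L)) (K : Finset (Fin N)) : ℝ :=
  if h : K.card = I.card then
    (Matrix.det (fun a b : Fin I.card =>
      A (K.orderEmbOfFin h a) (I.orderEmbOfFin rfl b))) ^ 2
  else 0

lemma mnr_nonneg {N L : ℕ} (A : Matrix (Fin N) (Fin L) ℝ)
    (I : Finset (Fin L)) (K : Finset (Fin N)) : 0 ≤ mnr A I K := by
  rw [mnr]; split_ifs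
  · exact sq_nonneg _
  · exact le_refl 0

lemma colMinorSum_eq {N L : ℕ} (A : Matrix (Fin N) (Fin L) ℝ) (I : Finset (Fin L)) :
    colMinorSum A I = ∑ K ∈ (Finset.univ.powersetCard I.card : Finset (Finset (Fin N))),
      mnr A I K := by
  rw [colMinorSum, ← Finset.sum_attach (Finset.univ.powersetCard I.card) (mnr A I)]
  refine Finset.sum_congr rfl fun J _ => ?_
  rw [mnr, dif_pos (Finset.mem_powersetCard.mp J.2).2]
  simp [Finset.coe_orderIsoOfFin_apply]

/-- Squared determinant is unchanged by deleting a unit row and its column. -/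
lemma detsq_unit_row {n : ℕ} (M : Matrix (Fin (n+1)) (Fin (n+1)) ℝ) (r c : Fin (n+1))
    (h : ∀ b, M r b = if b = c then 1 else 0) :
    M.det ^ 2 = (M.submatrix r.succAbove c.succAbove).det ^ 2 := by
  rw [Matrix.det_succ_row M r, Finset.sum_eq_single c]
  · rw [h c, if_pos rfl, mul_one, mul_pow, ← pow_mul,
      mul_comm ((r : ℕ) + (c : ℕ)) 2, pow_mul, neg_one_sq, one_pow, one_mul]
  · intro b _ hb
    rw [h b, if_neg hb, mul_zero, zero_mul]
  · intro hc
    exact absurd (Finset.mem_univ c) hc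

end Stmt8Aux

/-- Let `A` be an `N × L` real matrix of rank `L` containing the `L × L`
identity matrix as the submatrix on the rows indexed by an injective `g : Fin L → Fin N`
(the row set `J` with `A_J = 1_L`).  For `I₁ ⊊ I₂ ⊆ {1, …, L}`, the sum of the squares
of the `|I₁| × |I₁|` minors of the column submatrix `A^{I₁}` is at most the sum of the
squares of the `|I₂| × |I₂|` minors of `A^{I₂}`. -/
theorem stmt8 {N L : ℕ} (hL : 1 ≤ L) (hNL : L < N)
    (A : Matrix (Fin N) (Fin L) ℝ) (hrank : A.rank = L)
    (g : Fin L → Fin N) (hg : Function.Injective g)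
    (hid : A.submatrix g id = (1 : Matrix (Fin L) (Fin L) ℝ))
    (I₁ I₂ : Finset (Fin L)) (h12 : I₁ ⊂ I₂) :
    colMinorSum A I₁ ≤ colMinorSum A I₂ := by
  classical
  open Stmt8Aux in
  have hA : ∀ (j : Fin L) (i : Fin L), A (g j) i = if j = i then 1 else 0 := by
    intro j i
    have := congrFun (congrFun hid j) i
    simpa [Matrix.one_apply] using this
  -- minors of A^I on row sets containing g j vanish, for j ∉ I
  have hzero : ∀ (I : Finset (Fin L)) (j : Fin L), j ∉ I →
      ∀ K : Finset (Fin N), g j ∈ K → Stmt8Aux.mnr A I K = 0 := by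
    intro I j hj K hK
    rw [Stmt8Aux.mnr]
    split_ifs with h
    · have : ∃ a : Fin I.card, K.orderEmbOfFin h a = g j := by
        refine ⟨(K.orderIsoOfFin h).symm ⟨g j, hK⟩, ?_⟩
        rw [← Finset.coe_orderIsoOfFin_apply]
        simp
      obtain ⟨a, ha⟩ := this
      have hdet : Matrix.det (fun a b : Fin I.card =>
          A (K.orderEmbOfFin h a) (I.orderEmbOfFin rfl b)) = 0 := by
        refine Matrix.det_eq_zero_of_row_eq_zero a fun b => ?_
        rw [ha, hA, if_neg]
        intro hji
        exact hj (hji ▸ Finset.orderEmbOfFin_mem I rfl b)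
      rw [hdet]
      norm_num
    · rfl
  -- the key one-step inequality
  have step : ∀ (I : Finset (Fin L)) (j : Fin L), j ∉ I →
      colMinorSum A I ≤ colMinorSum A (insert j I) := by
    intro I j hj
    set k := I.card with hk
    have hI' : (insert j I).card = k + 1 := Finset.card_insert_of_notMem hj
    rw [Stmt8Aux.colMinorSum_eq, Stmt8Aux.colMinorSum_eq, hI']
    calc ∑ K ∈ (Finset.univ.powersetCard k : Finset (Finset (Fin N))), mnr A I K
        = ∑ K ∈ (Finset.univ.powersetCard k : Finset (Finset (Fin N))) |>.filter
            (fun K => g j ∉ K), mnr A I K := by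
          rw [Finset.sum_filter_of_ne]
          intro K _ hne
          intro hgK
          exact hne (hzero I j hj K hgK)
      _ = ∑ K ∈ (Finset.univ.powersetCard (k+1) : Finset (Finset (Fin N))) |>.filter
            (fun K => g j ∈ K), mnr A (insert j I) K := by
          refine Finset.sum_nbij' (fun K => insert (g j) K) (fun K => K.erase (g j))
            ?_ ?_ ?_ ?_ ?_
          · intro S hS
            simp only [Finset.mem_filter, Finset.mem_powersetCard_univ] at hS ⊢
            exact ⟨by rw [Finset.card_insert_of_notMem hS.2, hS.1],
              Finset.mem_insert_self _ _⟩
          · intro K hK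
            simp only [Finset.mem_filter, Finset.mem_powersetCard_univ] at hK ⊢
            refine ⟨?_, Finset.notMem_erase _ _⟩
            rw [Finset.card_erase_of_mem hK.2, hK.1]
            omega
          · intro S hS
            simp only [Finset.mem_filter, Finset.mem_powersetCard_univ] at hS
            exact Finset.erase_insert hS.2
          · intro K hK
            simp only [Finset.mem_filter, Finset.mem_powersetCard_univ] at hK
            exact Finset.insert_erase hK.2
          · intro S hS
            simp only [Finset.mem_filter, Finset.mem_powersetCard_univ] at hS
            obtain ⟨hScard, hgS⟩ := hS
            -- main computation: mnr A I S = mnr A (insert j I) (insert (g j) S)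
            have hKcard : (insert (g j) S).card = (insert j I).card := by
              rw [Finset.card_insert_of_notMem hgS, hScard, hI']
            rw [Stmt8Aux.mnr, Stmt8Aux.mnr, dif_pos hScard, dif_pos hKcard]
            set K := insert (g j) S with hKdef
            set I' := insert j I with hI'def
            -- reindex the big determinant over Fin I'.card to Fin (k+1)
            set e : Fin (k+1) ≃ Fin I'.card := finCongr hI'.symm with he
            rw [← Matrix.det_submatrix_equiv_self e
              (fun a b : Fin I'.card => A (K.orderEmbOfFin hKcard a) (I'.orderEmbOfFin rfl b))]
            set u : Fin (k+1) → Fin N := fun a => K.orderEmbOfFin hKcard (e a) with hu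
            set f : Fin (k+1) → Fin L := fun b => I'.orderEmbOfFin rfl (e b) with hf
            have hKk : K.card = k + 1 := by rw [hKcard, hI']
            have hIk : I'.card = k + 1 := hI'
            have humono : StrictMono u := by
              intro a b hab
              exact (K.orderEmbOfFin hKcard).strictMono (by simp only [he, finCongr_apply, Fin.lt_def, Fin.coe_cast]; exact hab)
            have hfmono : StrictMono f := by
              intro a b hab
              exact (I'.orderEmbOfFin rfl).strictMono (by simp only [he, finCongr_apply, Fin.lt_def, Fin.coe_cast]; exact hab)
            have huK : ∀ a, u a ∈ K := fun a => Finset.orderEmbOfFin_mem _ _ _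
            have hfI : ∀ b, f b ∈ I' := fun b => Finset.orderEmbOfFin_mem _ _ _
            have hueq : u = ⇑(K.orderEmbOfFin hKk) := Finset.orderEmbOfFin_unique hKk huK humono
            have hfeq : f = ⇑(I'.orderEmbOfFin hIk) := Finset.orderEmbOfFin_unique hIk hfI hfmono
            -- positions of g j and j
            set r : Fin (k+1) := (K.orderIsoOfFin hKk).symm ⟨g j, Finset.mem_insert_self _ _⟩
              with hr
            set c : Fin (k+1) := (I'.orderIsoOfFin hIk).symm ⟨j, Finset.mem_insert_self _ _⟩
              with hc
            have hur : u r = g j := by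
              rw [hueq, ← Finset.coe_orderIsoOfFin_apply, hr,
                OrderIso.apply_symm_apply]
            have hfc : f c = j := by
              rw [hfeq, ← Finset.coe_orderIsoOfFin_apply, hc,
                OrderIso.apply_symm_apply]
            have hrow : ∀ b, A (u r) (f b) = if b = c then 1 else 0 := by
              intro b
              rw [hur, hA]
              congr 1
              simp only [eq_iff_iff]
              constructor
              · intro hjb
                exact hfmono.injective (by rw [hfc, hjb])
              · intro hbc
                rw [hbc, hfc]
            have hmain := Stmt8Aux.detsq_unit_row
              (fun a b : Fin (k+1) => A (u a) (f b)) r c hrow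
            have hrowcomp : u ∘ r.succAbove = ⇑(S.orderEmbOfFin hScard) := by
              refine Finset.orderEmbOfFin_unique hScard ?_ ?_
              · intro a
                have h1 : u (r.succAbove a) ∈ K := huK _
                have h2 : u (r.succAbove a) ≠ g j := by
                  rw [← hur]
                  exact fun hcon => (Fin.succAbove_ne r a) (humono.injective hcon)
                rw [hKdef] at h1
                rcases Finset.mem_insert.mp h1 with h | h
                · exact absurd h h2
                · exact h
              · exact humono.comp (Fin.strictMono_succAbove r)
            have hcolcomp : f ∘ c.succAbove = ⇑(I.orderEmbOfFin rfl) := by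
              refine Finset.orderEmbOfFin_unique rfl ?_ ?_
              · intro b
                have h1 : f (c.succAbove b) ∈ I' := hfI _
                have h2 : f (c.succAbove b) ≠ j := by
                  rw [← hfc]
                  exact fun hcon => (Fin.succAbove_ne c b) (hfmono.injective hcon)
                rw [hI'def] at h1
                rcases Finset.mem_insert.mp h1 with h | h
                · exact absurd h h2
                · exact h
              · exact hfmono.comp (Fin.strictMono_succAbove c)
            have hsub : (Matrix.submatrix (fun a b : Fin (k+1) => A (u a) (f b))
                r.succAbove c.succAbove)
                = fun a b : Fin k => A (S.orderEmbOfFin hScard a) (I.orderEmbOfFin rfl b) := by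
              funext a b
              show A (u (r.succAbove a)) (f (c.succAbove b)) = _
              rw [← congrFun hrowcomp a, ← congrFun hcolcomp b]
              rfl
            have : Matrix.submatrix
                (fun a b : Fin I'.card => A (K.orderEmbOfFin hKcard a) (I'.orderEmbOfFin rfl b))
                e e = fun a b : Fin (k+1) => A (u a) (f b) := rfl
            rw [this, hmain, hsub]
      _ ≤ ∑ K ∈ (Finset.univ.powersetCard (k+1) : Finset (Finset (Fin N))),
            mnr A (insert j I) K := by
          refine Finset.sum_le_sum_of_subset_of_nonneg (Finset.filter_subset _ _) ?_
          intro K _ _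
          exact Stmt8Aux.mnr_nonneg A _ K
  -- iterate
  have key : ∀ u : Finset (Fin L), ∀ s : Finset (Fin L), Disjoint (u : Finset (Fin L)) s →
      colMinorSum A s ≤ colMinorSum A (s ∪ u) := by
    intro u
    induction u using Finset.induction_on with
    | empty => intro s _; simp
    | @insert a u ha ih =>
      intro s hdis
      have hd1 : Disjoint u s := (Finset.disjoint_insert_left.mp hdis).2
      have has : a ∉ s := (Finset.disjoint_insert_left.mp hdis).1
      have h1 : colMinorSum A s ≤ colMinorSum A (s ∪ u) := ih s hd1
      have h2 : a ∉ s ∪ u := by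
        simp only [Finset.mem_union, not_or]
        exact ⟨has, ha⟩
      calc colMinorSum A s ≤ colMinorSum A (s ∪ u) := h1
        _ ≤ colMinorSum A (insert a (s ∪ u)) := step _ a h2
        _ = colMinorSum A (s ∪ insert a u) := by rw [Finset.union_insert]
  have := key (I₂ \ I₁) I₁ (Finset.sdiff_disjoint)
  rwa [Finset.union_sdiff_of_subset h12.subset] at this
end

section
/- Let X = (Y Z) be an N × L real matrix of rank L partitioned into an N × J block Y and an N × (L−J) block Z with 1 ≤ J < L. Then the Euclidean norm of the vector of L × L minors of X is at most the product of the Euclidean norm of the vector of J × J minors of Y and the Euclidean norm of the vector of (L−J) × (L−J) minors of Z (generalized Hadamard inequality for compound matrices). -/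
open Matrix Finset

section CB
variable {N L : ℕ}

/-- rows selector of a size-`L` subset. -/
noncomputable def rowsOf (I : {I : Finset (Fin N) // I ∈ (Finset.univ.powersetCard L : Finset (Finset (Fin N)))}) : Fin L → Fin N :=
  fun a => I.1.orderIsoOfFin (Finset.mem_powersetCard.mp I.2).2 a

lemma cb_step1 (A B : Matrix (Fin N) (Fin L) ℝ) :
    det (Aᵀ * B) = ∑ p : Fin L → Fin N, det (A.submatrix p id) * ∏ i, B (p i) i := by
  have h1 : det (Aᵀ * B) = ∑ p : Fin L → Fin N, ∑ σ : Equiv.Perm (Fin L),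
      (Equiv.Perm.sign σ : ℝ) * ∏ i, (A (p i) (σ i) * B (p i) i) := by
    simp only [det_apply', mul_apply, transpose_apply, prod_univ_sum, mul_sum,
      Fintype.piFinset_univ]
    rw [Finset.sum_comm]
  rw [h1]
  refine Finset.sum_congr rfl fun p _ => ?_
  have h2 : det (A.submatrix p id) = ∑ σ : Equiv.Perm (Fin L),
      (Equiv.Perm.sign σ : ℝ) * ∏ i, A (p i) (σ i) := by
    rw [← det_transpose, det_apply']
    simp [Matrix.transpose_apply, Matrix.submatrix_apply]
  rw [h2, Finset.sum_mul]
  refine Finset.sum_congr rfl fun σ _ => ?_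
  rw [Finset.prod_mul_distrib]
  ring

end CB
section CB2
variable {N L : ℕ}

lemma cb_step2 (A B : Matrix (Fin N) (Fin L) ℝ) :
    ∑ p : Fin L → Fin N, det (A.submatrix p id) * ∏ i, B (p i) i
    = ∑ p ∈ Finset.univ.filter (fun p : Fin L → Fin N => Function.Injective p),
        det (A.submatrix p id) * ∏ i, B (p i) i := by
  symm
  apply Finset.sum_subset (Finset.filter_subset _ _)
  intro p _ hp
  simp only [Finset.mem_filter, Finset.mem_univ, true_and] at hp
  rw [Function.Injective] at hp
  push_neg at hp
  obtain ⟨i, j, hpij, hij⟩ := hp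
  rw [Matrix.det_zero_of_row_eq hij (by ext k; simp [hpij]), zero_mul]

lemma image_rowsOf (I : {I : Finset (Fin N) // I ∈ (Finset.univ.powersetCard L : Finset (Finset (Fin N)))}) :
    Finset.univ.image (rowsOf I) = I.1 := by
  ext x
  simp only [Finset.mem_image, Finset.mem_univ, true_and, rowsOf]
  constructor
  · rintro ⟨a, rfl⟩; exact (I.1.orderIsoOfFin _ a).2
  · intro hx
    exact ⟨(I.1.orderIsoOfFin (Finset.mem_powersetCard.mp I.2).2).symm ⟨x, hx⟩, by simp⟩

lemma rowsOf_injective (I : {I : Finset (Fin N) // I ∈ (Finset.univ.powersetCard L : Finset (Finset (Fin N)))}) :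
    Function.Injective (rowsOf I) := by
  intro a b h
  have := (I.1.orderIsoOfFin (Finset.mem_powersetCard.mp I.2).2).injective (Subtype.ext h)
  exact this

lemma himg (p : Fin L → Fin N) (hp : Function.Injective p) :
    Finset.univ.image p ∈ (Finset.univ.powersetCard L : Finset (Finset (Fin N))) := by
  rw [Finset.mem_powersetCard]
  exact ⟨Finset.subset_univ _, by rw [Finset.card_image_of_injective _ hp, Finset.card_univ,
    Fintype.card_fin]⟩

/-- the subset attached to an injective `p`. -/
noncomputable def setOf' (p : Fin L → Fin N) (hp : Function.Injective p) :
    {I : Finset (Fin N) // I ∈ (Finset.univ.powersetCard L : Finset (Finset (Fin N)))} :=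
  ⟨Finset.univ.image p, himg p hp⟩

/-- the permutation attached to an injective `p`. -/
noncomputable def permOf (p : Fin L → Fin N) (hp : Function.Injective p) :
    Equiv.Perm (Fin L) :=
  Equiv.ofBijective
    (fun k => (Finset.orderIsoOfFin _
        (Finset.mem_powersetCard.mp (himg p hp)).2).symm
        ⟨p k, Finset.mem_image_of_mem p (Finset.mem_univ k)⟩)
    (Finite.injective_iff_bijective.mp (fun a b hab => by
      apply hp
      have := congrArg (fun t => ((Finset.orderIsoOfFin _
        (Finset.mem_powersetCard.mp (himg p hp)).2) t : Fin N)) hab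
      simpa using this))

lemma rowsOf_permOf (p : Fin L → Fin N) (hp : Function.Injective p) (k : Fin L) :
    rowsOf (setOf' p hp) (permOf p hp k) = p k := by
  simp [rowsOf, setOf', permOf, Equiv.ofBijective_apply]
  exact congrArg Subtype.val ((Finset.orderIsoOfFin _ _).apply_symm_apply _)

lemma cb_step3 (f : (Fin L → Fin N) → ℝ) :
    ∑ p ∈ Finset.univ.filter (fun p : Fin L → Fin N => Function.Injective p), f p
    = ∑ x ∈ (Finset.univ.powersetCard L : Finset (Finset (Fin N))).attach ×ˢ
        (Finset.univ : Finset (Equiv.Perm (Fin L))),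
        f (fun i => rowsOf x.1 (x.2 i)) := by
  refine Finset.sum_bij'
    (i := fun p hp => (setOf' p (by simpa using (Finset.mem_filter.mp hp).2),
       permOf p (by simpa using (Finset.mem_filter.mp hp).2)))
    (j := fun x _ => fun i => rowsOf x.1 (x.2 i))
    ?_ ?_ ?_ ?_ ?_
  · intro p hp
    exact Finset.mem_product.mpr ⟨Finset.mem_attach _ _, Finset.mem_univ _⟩
  · intro x _
    simp only [Finset.mem_filter, Finset.mem_univ, true_and]
    exact (rowsOf_injective x.1).comp x.2.injective
  · intro p hp
    funext k
    exact rowsOf_permOf p (by simpa using (Finset.mem_filter.mp hp).2) k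
  · intro x hx
    have hinj : Function.Injective (fun i => rowsOf x.1 (x.2 i)) :=
      (rowsOf_injective x.1).comp x.2.injective
    have hset : setOf' _ hinj = x.1 := by
      apply Subtype.ext
      show Finset.univ.image (fun i => rowsOf x.1 (x.2 i)) = x.1.1
      rw [← image_rowsOf x.1]
      ext y
      simp only [Finset.mem_image, Finset.mem_univ, true_and]
      constructor
      · rintro ⟨k, rfl⟩; exact ⟨x.2 k, rfl⟩
      · rintro ⟨k, rfl⟩; exact ⟨x.2.symm k, by simp⟩
    have hperm : permOf _ hinj = x.2 := by
      apply Equiv.ext; intro k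
      apply rowsOf_injective x.1
      have h1 := rowsOf_permOf _ hinj k
      rw [hset] at h1
      exact h1
    exact Prod.ext hset hperm
  · intro p hp
    congr 1
    funext k
    exact (rowsOf_permOf p (by simpa using (Finset.mem_filter.mp hp).2) k).symm

end CB2
lemma cauchy_binet {N L : ℕ} (A B : Matrix (Fin N) (Fin L) ℝ) :
    det (Aᵀ * B) = ∑ I ∈ (Finset.univ.powersetCard L : Finset (Finset (Fin N))).attach,
      det (A.submatrix (rowsOf I) id) * det (B.submatrix (rowsOf I) id) := by
  rw [cb_step1, cb_step2, cb_step3 (fun p => det (A.submatrix p id) * ∏ i, B (p i) i),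
    Finset.sum_product]
  refine Finset.sum_congr rfl fun I _ => ?_
  rw [det_apply' (B.submatrix (rowsOf I) id), Finset.mul_sum]
  refine Finset.sum_congr rfl fun σ _ => ?_
  have h1 : (A.submatrix (fun i => rowsOf I (σ i)) id)
      = (A.submatrix (rowsOf I) id).submatrix σ id := rfl
  rw [h1, Matrix.det_permute]
  simp only [Matrix.submatrix_apply, id_eq]
  push_cast
  ring
lemma eigenvalues_le_one' {n : ℕ} {M : Matrix (Fin n) (Fin n) ℝ} (hM : M.IsHermitian)
    (h : ((1 : Matrix (Fin n) (Fin n) ℝ) - M).PosSemidef) (i : Fin n) :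
    hM.eigenvalues i ≤ 1 := by
  set v : EuclideanSpace ℝ (Fin n) := hM.eigenvectorBasis i with hv
  have h0 := h.dotProduct_mulVec_nonneg ⇑v
  have hvv : star ⇑v ⬝ᵥ ⇑v = 1 := by
    have h1 : ‖v‖ = 1 := hM.eigenvectorBasis.orthonormal.1 i
    have h2 : (inner ℝ v v : ℝ) = 1 := by
      rw [real_inner_self_eq_norm_sq, h1]; norm_num
    rw [← h2]
    simp [PiLp.inner_apply, dotProduct, RCLike.inner_apply, mul_comm]
    rw [EuclideanSpace.norm_eq, Real.sq_sqrt (by positivity)]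
    simp [Real.norm_eq_abs, sq_abs, sq]
  have he := hM.eigenvalues_eq i
  rw [Matrix.sub_mulVec, Matrix.one_mulVec, dotProduct_sub, hvv] at h0
  simp only [RCLike.re_to_real] at he
  rw [← hv] at he
  linarith [h0, le_of_eq he]
open scoped MatrixOrder in
lemma det_le_det' {n : ℕ} {P R : Matrix (Fin n) (Fin n) ℝ} (hP : P.PosSemidef)
    (hPR : (R - P).PosSemidef) (hR : R.PosDef) : P.det ≤ R.det := by
  have hRs := hR.posSemidef
  set C := CFC.sqrt R with hCdef
  have hCpsd : C.PosSemidef := (CFC.sqrt_nonneg R).posSemidef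
  have hCC : C * C = R := CFC.sqrt_mul_sqrt_self R hRs.nonneg
  have hdet : det C * det C = det R := by rw [← det_mul, hCC]
  have hdR : (0:ℝ) < det R := hR.det_pos
  have hdC : IsUnit (det C) := by
    refine isUnit_iff_ne_zero.mpr fun h => ?_
    rw [h, zero_mul] at hdet
    exact hdR.ne' hdet.symm
  haveI := C.invertibleOfIsUnitDet hdC
  have hCinv : C⁻¹ * C = 1 := nonsing_inv_mul C hdC
  have hCinv' : C * C⁻¹ = 1 := mul_nonsing_inv C hdC
  have hCH : C⁻¹ᴴ = C⁻¹ := by rw [conjTranspose_nonsing_inv, hCpsd.1.eq]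
  set M := C⁻¹ * P * C⁻¹ with hMdef
  have hMpsd : M.PosSemidef := by
    have := hP.mul_mul_conjTranspose_same C⁻¹
    rwa [hCH] at this
  have hone : (1 : Matrix (Fin n) (Fin n) ℝ) - M = C⁻¹ * (R - P) * C⁻¹ := by
    rw [Matrix.mul_sub, Matrix.sub_mul, hMdef]
    congr 1
    rw [← hCC, ← Matrix.mul_assoc, Matrix.mul_assoc (C⁻¹ * C), hCinv, hCinv',
      Matrix.one_mul]
  have h1M : ((1 : Matrix (Fin n) (Fin n) ℝ) - M).PosSemidef := by
    rw [hone]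
    have := hPR.mul_mul_conjTranspose_same C⁻¹
    rwa [hCH] at this
  have hdetM : det M ≤ 1 := by
    rw [hMpsd.1.det_eq_prod_eigenvalues]
    push_cast
    apply Finset.prod_le_one
    · intro i _; exact hMpsd.eigenvalues_nonneg i
    · intro i _; exact eigenvalues_le_one' hMpsd.1 h1M i
  have hPM : P = C * M * C := by
    rw [hMdef, ← Matrix.mul_assoc, ← Matrix.mul_assoc, hCinv', Matrix.one_mul,
      Matrix.mul_assoc, hCinv, Matrix.mul_one]
  calc P.det = det C * det M * det C := by rw [hPM, det_mul, det_mul]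
    _ = det R * det M := by rw [← hdet]; ring
    _ ≤ det R * 1 := by exact mul_le_mul_of_nonneg_left hdetM hdR.le
    _ = det R := by ring
lemma posDef_transpose_mul_self {m n : ℕ} (Y : Matrix (Fin m) (Fin n) ℝ)
    (h : ∀ v : Fin n → ℝ, Y *ᵥ v = 0 → v = 0) : (Yᵀ * Y).PosDef := by
  refine Matrix.PosDef.of_dotProduct_mulVec_pos ?_ ?_
  · have := Matrix.isHermitian_conjTranspose_mul_self Y
    rwa [conjTranspose_eq_transpose_of_trivial] at this
  · intro x hx
    have hkey : star x ⬝ᵥ ((Yᵀ * Y) *ᵥ x) = (Y *ᵥ x) ⬝ᵥ (Y *ᵥ x) := by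
      rw [← Matrix.mulVec_mulVec, Matrix.dotProduct_mulVec, star_trivial,
        Matrix.vecMul_transpose]
    rw [hkey]
    have hYx : Y *ᵥ x ≠ 0 := fun hc => hx (h x hc)
    have : (0:ℝ) < ∑ i, (Y *ᵥ x) i * (Y *ᵥ x) i := by
      obtain ⟨i, hi⟩ := Function.ne_iff.mp hYx
      apply Finset.sum_pos' (fun j _ => mul_self_nonneg _)
      exact ⟨i, Finset.mem_univ i, mul_self_pos.mpr (by simpa using hi)⟩
    simpa [dotProduct] using this

lemma mulVec_eq_zero_of_rank {m n : ℕ} (X : Matrix (Fin m) (Fin n) ℝ)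
    (hrank : X.rank = n) : ∀ v : Fin n → ℝ, X *ᵥ v = 0 → v = 0 := by
  have h2 := X.mulVecLin.finrank_range_add_finrank_ker
  rw [Matrix.rank] at hrank
  rw [hrank, Module.finrank_pi] at h2
  simp only [Fintype.card_fin] at h2
  have hker : LinearMap.ker X.mulVecLin = ⊥ := by
    apply Submodule.finrank_eq_zero.mp
    omega
  intro v hv
  have : v ∈ LinearMap.ker X.mulVecLin := by simpa [Matrix.mulVecLin_apply] using hv
  rwa [hker, Submodule.mem_bot] at this
lemma minorSum_eq_det {N L : ℕ} (A : Matrix (Fin N) (Fin L) ℝ) :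
    minorSum A = det (Aᵀ * A) := by
  rw [cauchy_binet A A, minorSum]
  refine Finset.sum_congr rfl fun I _ => ?_
  rw [pow_two]
  rfl

/-- generalized Hadamard inequality: let `X = (Y Z)` be an `N × L` real
matrix of rank `L = J + J'` (with `1 ≤ J`, `1 ≤ J'`, so `1 ≤ J < L`), partitioned into
an `N × J` block `Y` and an `N × J'` block `Z`.  Then the Euclidean norm of the vector
of `L × L` minors of `X` is at most the product of the Euclidean norm of the vector of
`J × J` minors of `Y` and the Euclidean norm of the vector of `J' × J'` minors of
`Z`. -/
theorem stmt14 {N J J' : ℕ} (hJ : 1 ≤ J) (hJ' : 1 ≤ J')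
    (X : Matrix (Fin N) (Fin (J + J')) ℝ) (hrank : X.rank = J + J')
    (Y : Matrix (Fin N) (Fin J) ℝ) (Z : Matrix (Fin N) (Fin J') ℝ)
    (hY : ∀ (i : Fin N) (a : Fin J), X i (Fin.castAdd J' a) = Y i a)
    (hZ : ∀ (i : Fin N) (b : Fin J'), X i (Fin.natAdd J b) = Z i b) :
    Real.sqrt (minorSum X) ≤ Real.sqrt (minorSum Y) * Real.sqrt (minorSum Z) := by
  classical
  have hXv := mulVec_eq_zero_of_rank X hrank
  have hYv : ∀ v : Fin J → ℝ, Y *ᵥ v = 0 → v = 0 := by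
    intro v hv
    have hw : X *ᵥ (Fin.append v 0) = Y *ᵥ v := by
      funext i
      simp only [Matrix.mulVec, dotProduct]
      rw [Fin.sum_univ_add]
      simp [Fin.append_left, Fin.append_right, hY]
    have h0 := hXv _ (by rw [hw, hv])
    funext a
    have := congrFun h0 (Fin.castAdd J' a)
    simpa [Fin.append_left] using this
  have hZv : ∀ v : Fin J' → ℝ, Z *ᵥ v = 0 → v = 0 := by
    intro v hv
    have hw : X *ᵥ (Fin.append 0 v) = Z *ᵥ v := by
      funext i
      simp only [Matrix.mulVec, dotProduct]
      rw [Fin.sum_univ_add]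
      simp [Fin.append_left, Fin.append_right, hZ]
    have h0 := hXv _ (by rw [hw, hv])
    funext b
    have := congrFun h0 (Fin.natAdd J b)
    simpa [Fin.append_right] using this
  set A := Yᵀ * Y with hAdef
  set B := Yᵀ * Z with hBdef
  set D := Zᵀ * Z with hDdef
  have hA : A.PosDef := posDef_transpose_mul_self Y hYv
  have hD : D.PosDef := posDef_transpose_mul_self Z hZv
  set G := Xᵀ * X with hGdef
  set F : Matrix (Fin J ⊕ Fin J') (Fin J ⊕ Fin J') ℝ :=
    G.submatrix finSumFinEquiv finSumFinEquiv with hFdef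
  have hFdet : det F = det G := det_submatrix_equiv_self _ _
  have hGpsd : G.PosSemidef := by
    have := Matrix.posSemidef_conjTranspose_mul_self X
    rwa [conjTranspose_eq_transpose_of_trivial] at this
  have hFpsd : F.PosSemidef := hGpsd.submatrix _
  have hFeq : F = fromBlocks A B Bᴴ D := by
    ext i j
    cases i with
    | inl a =>
      cases j with
      | inl b =>
        simp [hFdef, hGdef, hAdef, Matrix.mul_apply, Matrix.submatrix_apply,
          Matrix.fromBlocks, hY]
      | inr b =>
        simp [hFdef, hGdef, hBdef, Matrix.mul_apply, Matrix.submatrix_apply,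
          Matrix.fromBlocks, hY, hZ]
    | inr a =>
      cases j with
      | inl b =>
        simp only [hFdef, hGdef, hBdef, Matrix.submatrix_apply, Matrix.fromBlocks,
          Sum.elim_inl, Sum.elim_inr, finSumFinEquiv_apply_left, finSumFinEquiv_apply_right,
          Matrix.of_apply, Matrix.conjTranspose_apply, Matrix.mul_apply,
          Matrix.transpose_apply, star_trivial]
        rw [Finset.sum_congr rfl (fun k _ => by rw [hY k b, hZ k a, mul_comm])]
      | inr b =>
        simp [hFdef, hGdef, hDdef, Matrix.mul_apply, Matrix.submatrix_apply,
          Matrix.fromBlocks, hZ]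
  haveI : Invertible A := A.invertibleOfIsUnitDet hA.det_pos.ne'.isUnit
  have hSchurPsd : (D - Bᴴ * A⁻¹ * B).PosSemidef := by
    rw [hFeq] at hFpsd
    exact (Matrix.PosDef.fromBlocks₁₁ B D hA).mp hFpsd
  have hdetF : det F = det A * det (D - Bᴴ * A⁻¹ * B) := by
    rw [hFeq, Matrix.det_fromBlocks₁₁, invOf_eq_nonsing_inv]
  have hS : (Bᴴ * A⁻¹ * B).PosSemidef := hA.inv.posSemidef.conjTranspose_mul_mul_same B
  have hmono : det (D - Bᴴ * A⁻¹ * B) ≤ det D :=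
    det_le_det' hSchurPsd (by rw [sub_sub_cancel]; exact hS) hD
  have hdetG_le : det G ≤ det A * det D := by
    rw [← hFdet, hdetF]
    exact mul_le_mul_of_nonneg_left hmono hA.det_pos.le
  rw [minorSum_eq_det X, minorSum_eq_det Y, minorSum_eq_det Z, ← hGdef, ← hAdef, ← hDdef,
    ← Real.sqrt_mul hA.det_pos.le]
  exact Real.sqrt_le_sqrt hdetG_le
end
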